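/- (Dual strategy lemma.) Let S = (f₁, f₂) be any strategy and let S^d = (f₁ᵈ, f₂ᵈ) be its dual, defined by fᵢᵈ(x) = fᵢ(fun n => ¬ x n) (i.e., S^d plays S with the roles of white and black exchanged). Then for every p ∈ [0,1], V_{S^d}(p) = 2p − 1 + V_S(1−p). -/
import Mathlib


open MeasureTheory ENNReal

/-- `μ` is the i.i.d. Bernoulli(`p`) product measure on `ℕ → Bool`
(`true` = white), characterized by its values on cylinder sets. -/
def IsBernoulliProduct (p : ℝ) (μ : Measure (ℕ → Bool)) : Prop :=
  IsProbabilityMeasure μ ∧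
    ∀ (s : Finset ℕ) (c : ℕ → Bool),
      μ {x | ∀ n ∈ s, x n = c n} =
        ∏ n ∈ s, (if c n = true then ENNReal.ofReal p else ENNReal.ofReal (1 - p))

/-- A strategy: a pair of measurable functions, each taking the partner's
hat configuration to the index of the hat the player points at. -/
structure Strategy where
  f₁ : (ℕ → Bool) → ℕ
  f₂ : (ℕ → Bool) → ℕ
  meas₁ : Measurable f₁
  meas₂ : Measurable f₂

/-- The winning probability of a strategy, when each player's hats are
distributed according to `μ`, independently. -/
noncomputable def winProb (S : Strategy) (μ : Measure (ℕ → Bool)) : ℝ :=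
  ((μ.prod μ) {x : (ℕ → Bool) × (ℕ → Bool) |
    x.1 (S.f₁ x.2) = true ∧ x.2 (S.f₂ x.1) = true}).toReal

/-- The value of the game: supremum of winning probabilities over all strategies. -/
noncomputable def gameValue (μ : Measure (ℕ → Bool)) : ℝ :=
  ⨆ S : Strategy, winProb S μ

/-- The dual of a strategy: play the original strategy with the roles of
white and black exchanged. -/
def Strategy.dual (S : Strategy) : Strategy where
  f₁ := fun x => S.f₁ fun n => !(x n)
  f₂ := fun x => S.f₂ fun n => !(x n)
  meas₁ := S.meas₁.comp <| measurable_pi_lambda _ fun n =>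
    (measurable_of_countable not).comp (measurable_pi_apply n)
  meas₂ := S.meas₂.comp <| measurable_pi_lambda _ fun n =>
    (measurable_of_countable not).comp (measurable_pi_apply n)

namespace DualAux

/-- The "exchange white and black" involution. -/
def T : (ℕ → Bool) → (ℕ → Bool) := fun x n => !(x n)

lemma measurable_T : Measurable T :=
  measurable_pi_lambda _ fun n => (measurable_of_countable not).comp (measurable_pi_apply n)

def cylSet (s : Finset ℕ) (c : ℕ → Bool) : Set (ℕ → Bool) := {x | ∀ n ∈ s, x n = c n}

def cyls : Set (Set (ℕ → Bool)) := {t | ∃ s c, t = cylSet s c}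

lemma measurableSet_cylSet (s : Finset ℕ) (c : ℕ → Bool) : MeasurableSet (cylSet s c) := by
  have h : cylSet s c = ⋂ n ∈ s, (fun x : ℕ → Bool => x n) ⁻¹' {c n} := by
    ext x; simp [cylSet]
  rw [h]
  exact MeasurableSet.biInter s.countable_toSet fun n _ =>
    (measurable_pi_apply n) (measurableSet_singleton (c n))

lemma isPiSystem_cyls : IsPiSystem cyls := by
  rintro _ ⟨s, c, rfl⟩ _ ⟨t, d, rfl⟩ ⟨x₀, hx₀s, hx₀t⟩
  refine ⟨s ∪ t, fun n => if n ∈ s then c n else d n, ?_⟩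
  ext x
  simp only [cylSet, Set.mem_inter_iff, Set.mem_setOf_eq, Finset.mem_union]
  constructor
  · rintro ⟨h1, h2⟩ n hn
    by_cases hns : n ∈ s
    · simp [hns, h1 n hns]
    · simp [hns, h2 n (hn.resolve_left hns)]
  · intro h
    constructor
    · intro n hn
      have := h n (Or.inl hn); simpa [hn] using this
    · intro n hn
      by_cases hns : n ∈ s
      · have hc : c n = d n := (hx₀s n hns).symm.trans (hx₀t n hn)
        have := h n (Or.inl hns); simp only [hns, if_pos] at this
        rw [this, hc]
      · have := h n (Or.inr hn); simpa [hns] using this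

lemma meas_eval_eq (n : ℕ) (b : Bool) :
    MeasurableSet[MeasurableSpace.generateFrom cyls] {x : ℕ → Bool | x n = b} := by
  have h : {x : ℕ → Bool | x n = b} = cylSet {n} (fun _ => b) := by
    ext x; simp [cylSet]
  rw [h]
  exact MeasurableSpace.measurableSet_generateFrom ⟨{n}, fun _ => b, rfl⟩

lemma meas_eval (n : ℕ) (s : Set Bool) :
    MeasurableSet[MeasurableSpace.generateFrom cyls] ((fun x : ℕ → Bool => x n) ⁻¹' s) := by
  have h : (fun x : ℕ → Bool => x n) ⁻¹' s = ⋃ b ∈ s, {x : ℕ → Bool | x n = b} := by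
    ext x
    simp only [Set.mem_preimage, Set.mem_iUnion, Set.mem_setOf_eq]
    exact ⟨fun h => ⟨x n, h, rfl⟩, fun ⟨b, hb, he⟩ => he ▸ hb⟩
  rw [h]
  exact MeasurableSet.biUnion s.to_countable fun b _ => meas_eval_eq n b

lemma generateFrom_cyls :
    MeasurableSpace.generateFrom cyls = (inferInstance : MeasurableSpace (ℕ → Bool)) := by
  apply le_antisymm
  · exact MeasurableSpace.generateFrom_le (by rintro _ ⟨s, c, rfl⟩; exact measurableSet_cylSet s c)
  · have h : MeasurableSpace.pi ≤ MeasurableSpace.generateFrom cyls := by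
      refine iSup_le fun n => ?_
      rintro _ ⟨s', _, rfl⟩
      exact meas_eval n s'
    exact h

lemma ext_cyl {μ₁ μ₂ : Measure (ℕ → Bool)} [IsFiniteMeasure μ₁]
    (h : ∀ s c, μ₁ (cylSet s c) = μ₂ (cylSet s c)) (huniv : μ₁ Set.univ = μ₂ Set.univ) :
    μ₁ = μ₂ :=
  ext_of_generate_finite cyls generateFrom_cyls.symm isPiSystem_cyls
    (by rintro _ ⟨s, c, rfl⟩; exact h s c) huniv

lemma map_T {p : ℝ} {μp ν : Measure (ℕ → Bool)}
    (hp : IsBernoulliProduct p μp) (hν : IsBernoulliProduct (1 - p) ν) :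
    Measure.map T μp = ν := by
  haveI := hp.1; haveI := hν.1
  haveI : IsProbabilityMeasure (Measure.map T μp) :=
    Measure.isProbabilityMeasure_map measurable_T.aemeasurable
  refine ext_cyl (fun s c => ?_) (by simp [measure_univ])
  rw [Measure.map_apply measurable_T (measurableSet_cylSet s c)]
  have hpre : T ⁻¹' cylSet s c = cylSet s (fun n => !(c n)) := by
    ext x
    simp only [cylSet, Set.mem_preimage, Set.mem_setOf_eq, T]
    refine forall₂_congr fun n _ => ?_
    cases c n <;> cases x n <;> simp
  rw [hpre]
  have h1 := hp.2 s (fun n => !(c n))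
  have h2 := hν.2 s c
  rw [show cylSet s (fun n => !(c n)) = {x | ∀ n ∈ s, x n = (fun n => !(c n)) n} from rfl, h1]
  rw [show cylSet s c = {x | ∀ n ∈ s, x n = c n} from rfl] at *
  rw [h2]
  refine Finset.prod_congr rfl fun n _ => ?_
  cases c n <;> simp [sub_sub_cancel]

lemma measSet_snd (g : (ℕ → Bool) → ℕ) (hg : Measurable g) :
    MeasurableSet {y : (ℕ → Bool) × (ℕ → Bool) | y.2 (g y.1) = true} := by
  have h : {y : (ℕ → Bool) × (ℕ → Bool) | y.2 (g y.1) = true}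
      = ⋃ n, ((fun y : (ℕ → Bool) × (ℕ → Bool) => g y.1) ⁻¹' {n}
          ∩ (fun y : (ℕ → Bool) × (ℕ → Bool) => y.2 n) ⁻¹' {true}) := by
    ext y
    simp only [Set.mem_setOf_eq, Set.mem_iUnion, Set.mem_inter_iff, Set.mem_preimage,
      Set.mem_singleton_iff]
    exact ⟨fun h => ⟨g y.1, rfl, h⟩, fun ⟨n, hn, h⟩ => hn ▸ h⟩
  rw [h]
  refine MeasurableSet.iUnion fun n => MeasurableSet.inter ?_ ?_
  · exact (hg.comp measurable_fst) (measurableSet_singleton n)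
  · exact ((measurable_pi_apply n).comp measurable_snd) (measurableSet_singleton true)

lemma measSet_fst (g : (ℕ → Bool) → ℕ) (hg : Measurable g) :
    MeasurableSet {y : (ℕ → Bool) × (ℕ → Bool) | y.1 (g y.2) = true} :=
  measurable_swap (measSet_snd g hg)

lemma prob_snd {q : ℝ} {ν : Measure (ℕ → Bool)} (hν : IsBernoulliProduct q ν)
    (g : (ℕ → Bool) → ℕ) (hg : Measurable g) :
    (ν.prod ν) {y : (ℕ → Bool) × (ℕ → Bool) | y.2 (g y.1) = true} = ENNReal.ofReal q := by
  haveI := hν.1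
  rw [Measure.prod_apply (measSet_snd g hg)]
  have hsl : ∀ x : ℕ → Bool, ν {y : ℕ → Bool | y (g x) = true} = ENNReal.ofReal q := by
    intro x
    have h := hν.2 {g x} (fun _ => true)
    simpa using h
  calc ∫⁻ x, ν (Prod.mk x ⁻¹' {y : (ℕ → Bool) × (ℕ → Bool) | y.2 (g y.1) = true}) ∂ν
      = ∫⁻ x, ENNReal.ofReal q ∂ν := lintegral_congr fun x => hsl x
    _ = ENNReal.ofReal q := by simp [measure_univ]

lemma prob_fst {q : ℝ} {ν : Measure (ℕ → Bool)} (hν : IsBernoulliProduct q ν)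
    (g : (ℕ → Bool) → ℕ) (hg : Measurable g) :
    (ν.prod ν) {y : (ℕ → Bool) × (ℕ → Bool) | y.1 (g y.2) = true} = ENNReal.ofReal q := by
  haveI := hν.1
  have hswap : {y : (ℕ → Bool) × (ℕ → Bool) | y.1 (g y.2) = true}
      = Prod.swap ⁻¹' {y : (ℕ → Bool) × (ℕ → Bool) | y.2 (g y.1) = true} := rfl
  rw [hswap, ← Measure.map_apply measurable_swap (measSet_snd g hg), Measure.prod_swap,
    prob_snd hν g hg]

end DualAux

open DualAux

/-- The dual strategy lemma: `V_{S^d}(p) = 2p − 1 + V_S(1 − p)` for `p ∈ [0,1]`. -/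
theorem dual_strategy_winProb (μ : ℝ → Measure (ℕ → Bool))
    (hμ : ∀ p ∈ Set.Icc (0 : ℝ) 1, IsBernoulliProduct p (μ p))
    (S : Strategy) :
    ∀ p ∈ Set.Icc (0 : ℝ) 1,
      winProb S.dual (μ p) = 2 * p - 1 + winProb S (μ (1 - p)) := by
  intro p hp
  obtain ⟨hp0, hp1⟩ := hp
  have hμp := hμ p ⟨hp0, hp1⟩
  have hν := hμ (1 - p) ⟨by linarith, by linarith⟩
  set ν := μ (1 - p) with hνdef
  haveI := hμp.1; haveI := hν.1
  have hmapT : Measure.map T (μ p) = ν := map_T hμp hν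
  have hTmp : MeasurePreserving T (μ p) ν := ⟨measurable_T, hmapT⟩
  have hTT : MeasurePreserving (Prod.map T T) ((μ p).prod (μ p)) (ν.prod ν) := hTmp.prod hTmp
  set A := {y : (ℕ → Bool) × (ℕ → Bool) | y.1 (S.f₁ y.2) = true} with hAdef
  set B := {y : (ℕ → Bool) × (ℕ → Bool) | y.2 (S.f₂ y.1) = true} with hBdef
  have hA : MeasurableSet A := measSet_fst S.f₁ S.meas₁
  have hB : MeasurableSet B := measSet_snd S.f₂ S.meas₂
  have hEv : {x : (ℕ → Bool) × (ℕ → Bool) |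
      x.1 (S.dual.f₁ x.2) = true ∧ x.2 (S.dual.f₂ x.1) = true}
      = Prod.map T T ⁻¹' (A ∪ B)ᶜ := by
    ext x
    simp only [hAdef, hBdef, Set.mem_setOf_eq, Set.mem_preimage, Set.mem_compl_iff,
      Set.mem_union, Strategy.dual, Prod.map, T, not_or, Bool.not_eq_true', Bool.not_eq_false]
    exact Iff.rfl
  have key : ((μ p).prod (μ p)) {x : (ℕ → Bool) × (ℕ → Bool) |
      x.1 (S.dual.f₁ x.2) = true ∧ x.2 (S.dual.f₂ x.1) = true} = (ν.prod ν) (A ∪ B)ᶜ := by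
    rw [hEv]
    exact hTT.measure_preimage ((hA.union hB).compl).nullMeasurableSet
  have hinter : {x : (ℕ → Bool) × (ℕ → Bool) |
      x.1 (S.f₁ x.2) = true ∧ x.2 (S.f₂ x.1) = true} = A ∩ B := rfl
  have ha : (ν.prod ν) A = ENNReal.ofReal (1 - p) := prob_fst hν S.f₁ S.meas₁
  have hb : (ν.prod ν) B = ENNReal.ofReal (1 - p) := prob_snd hν S.f₂ S.meas₂
  have hie : (ν.prod ν) (A ∪ B) + (ν.prod ν) (A ∩ B) = (ν.prod ν) A + (ν.prod ν) B :=
    measure_union_add_inter A hB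
  have hcompl : (ν.prod ν) (A ∪ B)ᶜ = 1 - (ν.prod ν) (A ∪ B) := by
    rw [measure_compl (hA.union hB) (measure_ne_top _ _), measure_univ]
  have h1 : ((ν.prod ν) (A ∪ B)).toReal + ((ν.prod ν) (A ∩ B)).toReal = (1 - p) + (1 - p) := by
    rw [← ENNReal.toReal_add (measure_ne_top _ _) (measure_ne_top _ _), hie, ha, hb,
      ENNReal.toReal_add ofReal_ne_top ofReal_ne_top, ENNReal.toReal_ofReal (by linarith)]
  have hle : (ν.prod ν) (A ∪ B) ≤ 1 := prob_le_one
  unfold winProb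
  rw [key, hcompl, hinter, ENNReal.toReal_sub_of_le hle one_ne_top, ENNReal.toReal_one]
  linarith
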